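/- Let R be a finite commutative principal ideal ring and let A, B be r×n matrices over R with linearly independent rows such that row(A) = row(B). Then there exists an invertible r×r matrix Q over R with B = Q·A; consequently any r×r minor of B equals the corresponding r×r minor of A multiplied by the unit det(Q), so the Plücker coordinates of row(A) are unique up to a common unit factor. -/

import Mathlib

/-- Over a finite commutative principal ideal ring, two matrices with linearly
independent rows and the same row span differ by an invertible matrix `Q`; hence their
`r×r` minors (Plücker coordinates) agree up to the unit factor `det Q`. -/
theorem stmt12 (R : Type*) [CommRing R] [Fintype R] [IsPrincipalIdealRing R]
    (r n : ℕ) (A B : Matrix (Fin r) (Fin n) R)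
    (hA : LinearIndependent R A) (hB : LinearIndependent R B)
    (hAB : Submodule.span R (Set.range A) = Submodule.span R (Set.range B)) :
    ∃ Q : Matrix (Fin r) (Fin r) R, IsUnit Q ∧ B = Q * A ∧ IsUnit Q.det ∧
      ∀ g : Fin r → Fin n, StrictMono g →
        (B.submatrix id g).det = Q.det * (A.submatrix id g).det := by
  have hcoef : ∀ (M N : Matrix (Fin r) (Fin n) R),
      Submodule.span R (Set.range N) ≤ Submodule.span R (Set.range M) →
      ∃ P : Matrix (Fin r) (Fin r) R, N = P * M := by
    intro M N h
    have hmem : ∀ i, ∃ c : Fin r → R, ∑ j, c j • M j = N i := by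
      intro i
      exact (Submodule.mem_span_range_iff_exists_fun R).mp (h (Submodule.subset_span ⟨i, rfl⟩))
    choose P hP using hmem
    refine ⟨Matrix.of P, ?_⟩
    ext i k
    rw [Matrix.mul_apply]
    have := congrFun (hP i) k
    simpa [Finset.sum_apply, Pi.smul_apply, smul_eq_mul] using this.symm
  obtain ⟨Q, hQ⟩ := hcoef A B hAB.ge
  obtain ⟨P, hP⟩ := hcoef B A hAB.le
  have hQP : Q * P = 1 := by
    have hBB : (Q * P) * B = B := by rw [Matrix.mul_assoc, ← hP, ← hQ]
    have hli := Fintype.linearIndependent_iff.mp hB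
    ext i j
    have h1 : ∑ k, ((Q * P) i k - (1 : Matrix (Fin r) (Fin r) R) i k) • B k = 0 := by
      funext m
      have hrow : ∑ k, (Q * P) i k * B k m = B i m := by
        have := congrFun (congrFun hBB i) m
        simpa [Matrix.mul_apply] using this
      have hone : ∑ k, (1 : Matrix (Fin r) (Fin r) R) i k * B k m = B i m := by
        simp [Matrix.one_apply, Finset.sum_ite_eq]
      simp only [Finset.sum_apply, Pi.smul_apply, smul_eq_mul, sub_mul, Pi.zero_apply,
        Finset.sum_sub_distrib, hrow, hone, sub_self]
    have := hli _ h1 j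
    simpa [sub_eq_zero] using this
  have hdet : Q.det * P.det = 1 := by
    rw [← Matrix.det_mul, hQP, Matrix.det_one]
  have hQdet : IsUnit Q.det := IsUnit.of_mul_eq_one _ hdet
  refine ⟨Q, (Matrix.isUnit_iff_isUnit_det Q).mpr hQdet, hQ, hQdet, ?_⟩
  intro g hg
  have hsub : B.submatrix id g = Q * A.submatrix id g := by
    ext i j
    simp [hQ, Matrix.mul_apply, Matrix.submatrix_apply]
  rw [hsub, Matrix.det_mul]
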